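/- Let G and H be additive commutative groups, ψ: G → H a surjective group homomorphism with finite kernel, and R a G-graded commutative ring. If R is steady (every small G-graded R-module is finitely generated), then the ψ-coarsening R_[ψ] is steady (every small H-graded R_[ψ]-module is finitely generated). -/

import Mathlib

set_option maxHeartbeats 1000000
set_option synthInstance.maxHeartbeats 2000000


/-!
Common vocabulary: internally graded rings and modules, coarsening of gradings,
graded morphisms, and derived notions (injectivity, cogenerators, smallness, ...),
following Rohrer, "Coarsenings, injectives and Hom functors".
-/

open DirectSum

section Defs

variable {G H R : Type} [AddCommGroup G] [AddCommGroup H] [CommRing R]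

/-- The `ψ`-coarsening of a `G`-grading: `(ℳ_[ψ])_h = ⨁_{g ∈ ψ⁻¹(h)} ℳ_g`. -/
def coarsen {M : Type} [AddCommGroup M] (ψ : G →+ H) (ℳ : G → AddSubgroup M) (h : H) :
    AddSubgroup M :=
  ⨆ g ∈ ψ ⁻¹' {h}, ℳ g

/-- `(R, 𝒜)` is a `G`-graded commutative ring: the `𝒜 g` are additive subgroups whose
internal direct sum is `R`, and `𝒜 g * 𝒜 h ⊆ 𝒜 (g + h)`. -/
def IsGradedRing (𝒜 : G → AddSubgroup R) : Prop :=
  (1 : R) ∈ 𝒜 0 ∧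
  (∀ {g h : G} {a b : R}, a ∈ 𝒜 g → b ∈ 𝒜 h → a * b ∈ 𝒜 (g + h)) ∧
  (letI := Classical.decEq G; DirectSum.IsInternal 𝒜)

/-- `(M, ℳ)` is a `G`-graded module over the `G`-graded ring `(R, 𝒜)`. -/
def IsGradedModule {M : Type} [AddCommGroup M] [Module R M]
    (𝒜 : G → AddSubgroup R) (ℳ : G → AddSubgroup M) : Prop :=
  (∀ {g h : G} {r : R} {m : M}, r ∈ 𝒜 g → m ∈ ℳ h → r • m ∈ ℳ (g + h)) ∧
  (letI := Classical.decEq G; DirectSum.IsInternal ℳ)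

/-- A morphism of `G`-graded `R`-modules is an `R`-linear map respecting the gradings. -/
def IsGradedHom {M N : Type} [AddCommGroup M] [Module R M]
    [AddCommGroup N] [Module R N] (ℳ : G → AddSubgroup M) (𝒩 : G → AddSubgroup N)
    (f : M →ₗ[R] N) : Prop :=
  ∀ g : G, ∀ m ∈ ℳ g, f m ∈ 𝒩 g

/-- The grading of a direct sum of graded modules:
`(⨁_i N_i)_g` consists of the elements all of whose components lie in degree `g`. -/
def directSumGrading {ι : Type} {M : ι → Type}
    [∀ i, AddCommGroup (M i)] (ℳ : ∀ i, G → AddSubgroup (M i)) (g : G) :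
    AddSubgroup (⨁ i, M i) where
  carrier := {x | ∀ i, x i ∈ ℳ i g}
  zero_mem' := fun i => by simp only [DirectSum.zero_apply, ZeroMemClass.zero_mem]
  add_mem' := fun {x y} hx hy i => by
    rw [DirectSum.add_apply]; exact add_mem (hx i) (hy i)
  neg_mem' := fun {x} hx i => by
    rw [DFinsupp.neg_apply]; exact neg_mem (hx i)

/-- `(E, ℰ)` is an injective object of the category of `G`-graded `R`-modules:
every graded morphism into `E` extends along every injective graded morphism. -/
def IsInjectiveGradedModule (𝒜 : G → AddSubgroup R) {E : Type} [AddCommGroup E] [Module R E]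
    (ℰ : G → AddSubgroup E) : Prop :=
  ∀ (A B : Type) [AddCommGroup A] [Module R A] [AddCommGroup B] [Module R B],
    ∀ (𝒮A : G → AddSubgroup A) (𝒮B : G → AddSubgroup B),
      IsGradedModule 𝒜 𝒮A → IsGradedModule 𝒜 𝒮B →
      ∀ i : A →ₗ[R] B, Function.Injective i → IsGradedHom 𝒮A 𝒮B i →
      ∀ f : A →ₗ[R] E, IsGradedHom 𝒮A ℰ f →
      ∃ g : B →ₗ[R] E, IsGradedHom 𝒮B ℰ g ∧ g ∘ₗ i = f

/-- `(M, ℳ)` is a cogenerator of the category of `G`-graded `R`-modules: every nonzero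
graded morphism is detected by a graded morphism into `M`. -/
def IsCogenerator (𝒜 : G → AddSubgroup R) {M : Type} [AddCommGroup M] [Module R M]
    (ℳ : G → AddSubgroup M) : Prop :=
  ∀ (N N' : Type) [AddCommGroup N] [Module R N] [AddCommGroup N'] [Module R N'],
    ∀ (𝒩 : G → AddSubgroup N) (𝒩' : G → AddSubgroup N'),
      IsGradedModule 𝒜 𝒩 → IsGradedModule 𝒜 𝒩' →
      ∀ u : N →ₗ[R] N', IsGradedHom 𝒩 𝒩' u → u ≠ 0 →
      ∃ v : N' →ₗ[R] M, IsGradedHom 𝒩' ℳ v ∧ v ∘ₗ u ≠ 0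

/-- `M` is a small graded module: every graded morphism from `M` into a direct sum of
graded modules factors through a finite sub-sum. -/
def IsSmall (𝒜 : G → AddSubgroup R) {M : Type} [AddCommGroup M] [Module R M]
    (ℳ : G → AddSubgroup M) : Prop :=
  ∀ (ι : Type) (N : ι → Type) [∀ i, AddCommGroup (N i)] [∀ i, Module R (N i)],
    ∀ (𝒩 : ∀ i, G → AddSubgroup (N i)), (∀ i, IsGradedModule 𝒜 (𝒩 i)) →
      ∀ f : M →ₗ[R] ⨁ i, N i, IsGradedHom ℳ (directSumGrading 𝒩) f →
        ∃ s : Finset ι, ∀ (m : M) (i : ι), i ∉ s → f m i = 0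

/-- `M` is `P`-small: every graded morphism from `M` into a direct sum of copies of `P`
factors through a finite sub-sum. -/
def IsSmallWrt {P : Type} [AddCommGroup P] [Module R P] (𝒬 : G → AddSubgroup P)
    {M : Type} [AddCommGroup M] [Module R M] (ℳ : G → AddSubgroup M) : Prop :=
  ∀ (ι : Type) (f : M →ₗ[R] ⨁ (_ : ι), P),
    IsGradedHom ℳ (directSumGrading fun (_ : ι) => 𝒬) f →
      ∃ s : Finset ι, ∀ (m : M) (i : ι), i ∉ s → f m i = 0

/-- A `G`-graded ring is steady if all small graded modules over it are finitely generated. -/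
def IsSteady (𝒜 : G → AddSubgroup R) : Prop :=
  ∀ (M : Type) [AddCommGroup M] [Module R M], ∀ ℳ : G → AddSubgroup M,
    IsGradedModule 𝒜 ℳ → IsSmall 𝒜 ℳ → Module.Finite R M

/-- A graded ideal of the `G`-graded ring `(R, 𝒜)`: `I = ⨁_g (I ∩ R_g)`. -/
def IsGradedIdeal (𝒜 : G → AddSubgroup R) (I : Ideal R) : Prop :=
  I.toAddSubgroup = ⨆ g : G, I.toAddSubgroup ⊓ 𝒜 g

/-- A simple `G`-graded `R`-module: nonzero, and its only graded submodules are `0` and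
the whole module. -/
def IsSimpleGradedModule (𝒜 : G → AddSubgroup R) {S : Type} [AddCommGroup S] [Module R S]
    (𝒮 : G → AddSubgroup S) : Prop :=
  IsGradedModule 𝒜 𝒮 ∧ Nontrivial S ∧
    ∀ P : Submodule R S, (P.toAddSubgroup = ⨆ g : G, P.toAddSubgroup ⊓ 𝒮 g) →
      P = ⊥ ∨ P = ⊤

/-- The subgroup of `M →ₗ[R] N` consisting of the graded morphisms `M → N(g)`, i.e. the
degree-`g` component of the graded Hom module `⨁HOM(M, N)`. -/
def gradedHomSubgroup {M N : Type} [AddCommGroup M] [Module R M] [AddCommGroup N] [Module R N]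
    (ℳ : G → AddSubgroup M) (𝒩 : G → AddSubgroup N) (g : G) : AddSubgroup (M →ₗ[R] N) where
  carrier := {u | ∀ g' : G, ∀ m ∈ ℳ g', u m ∈ 𝒩 (g + g')}
  zero_mem' := fun g' m _ => by simp only [LinearMap.zero_apply, ZeroMemClass.zero_mem]
  add_mem' := fun {u v} hu hv g' m hm => by
    rw [LinearMap.add_apply]; exact add_mem (hu g' m hm) (hv g' m hm)
  neg_mem' := fun {u} hu g' m hm => by
    rw [LinearMap.neg_apply]; exact neg_mem (hu g' m hm)

end Defs


section SteadyAux

open DirectSum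

variable {G H : Type} [AddCommGroup G] [AddCommGroup H] [DecidableEq G] [DecidableEq H]

omit [DecidableEq G] [DecidableEq H] in
theorem mem_coarsen_of (ψ : G →+ H) {X : Type} [AddCommGroup X] {𝒩 : G → AddSubgroup X}
    {g : G} {h : H} (hg : ψ g = h) {x : X} (hx : x ∈ 𝒩 g) : x ∈ coarsen ψ 𝒩 h :=
  (le_iSup₂ (f := fun g (_ : g ∈ ψ ⁻¹' {h}) => 𝒩 g) g hg) hx

omit [DecidableEq G] [DecidableEq H] in
theorem coarsen_induction (ψ : G →+ H) {X : Type} [AddCommGroup X] (𝒩 : G → AddSubgroup X)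
    (h : H) {C : X → Prop} {x : X} (hx : x ∈ coarsen ψ 𝒩 h)
    (mem : ∀ g, ψ g = h → ∀ y ∈ 𝒩 g, C y) (zero : C 0)
    (add : ∀ y z, C y → C z → C (y + z)) : C x := by
  rw [coarsen, iSup_subtype'] at hx
  exact AddSubgroup.iSup_induction (C := C) _ hx (fun g y hy => mem g.1 g.2 y hy) zero add

omit [DecidableEq H] in
/-- In an internal direct sum, a finite sum of homogeneous elements of pairwise
distinct degrees can only be zero if each term is zero. -/
theorem sum_homog_eq_zero {X : Type} [AddCommGroup X] {𝒩 : G → AddSubgroup X}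
    (hint : DirectSum.IsInternal 𝒩) {κ : Type} [Fintype κ] [DecidableEq κ] {d : κ → G}
    (hd : Function.Injective d) {t : κ → X} (ht : ∀ j, t j ∈ 𝒩 (d j))
    (hsum : ∑ j, t j = 0) (j0 : κ) : t j0 = 0 := by
  have h2 : (∑ j, DirectSum.of (fun g => ↥(𝒩 g)) (d j) ⟨t j, ht j⟩) = 0 := by
    apply hint.injective
    rw [map_sum, map_zero]
    simpa only [DirectSum.coeAddMonoidHom_of] using hsum
  have h4 : (∑ j, DirectSum.of (fun g => ↥(𝒩 g)) (d j) ⟨t j, ht j⟩) (d j0) = 0 := by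
    rw [h2]; exact DirectSum.zero_apply _
  rw [DFinsupp.finset_sum_apply, Finset.sum_eq_single j0] at h4
  · have := congrArg (fun z : ↥(𝒩 (d j0)) => (z : X)) h4
    rwa [DirectSum.of_eq_same] at this
  · intro j _ hj
    exact DirectSum.of_eq_of_ne _ _ _ (fun e => hj (hd e.symm))
  · intro hj; exact absurd (Finset.mem_univ j0) hj

omit [DecidableEq H] in
/-- Components outside the fiber of `h` of the decomposition of an element
of `coarsen ψ 𝒩 h` vanish. -/
theorem coarsen_decompose_eq_zero (ψ : G →+ H) {X : Type} [AddCommGroup X]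
    {𝒩 : G → AddSubgroup X} (hint : DirectSum.IsInternal 𝒩) {h : H} {x : X}
    (hx : x ∈ coarsen ψ 𝒩 h) {g : G} (hg : ψ g ≠ h) :
    ((AddEquiv.ofBijective _ hint).symm x : ⨁ g, ↥(𝒩 g)) g = 0 := by
  refine coarsen_induction ψ 𝒩 h
    (C := fun y => (((AddEquiv.ofBijective (DirectSum.coeAddMonoidHom 𝒩) hint).symm y) g
      = (0 : ↥(𝒩 g)))) hx (fun g0 hg0 y hy => ?_) ?_ (fun y z hy hz => ?_)
  · show ((AddEquiv.ofBijective (DirectSum.coeAddMonoidHom 𝒩) hint).symm y) g = 0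
    have hrw : (AddEquiv.ofBijective (DirectSum.coeAddMonoidHom 𝒩) hint).symm y
        = DirectSum.of (fun g => ↥(𝒩 g)) g0 ⟨y, hy⟩ := by
      rw [AddEquiv.symm_apply_eq]
      exact (DirectSum.coeAddMonoidHom_of 𝒩 g0 ⟨y, hy⟩).symm
    rw [hrw]
    exact DirectSum.of_eq_of_ne _ _ _ (fun e => hg (e ▸ hg0))
  · show ((AddEquiv.ofBijective (DirectSum.coeAddMonoidHom 𝒩) hint).symm 0) g = 0
    rw [map_zero]; exact DirectSum.zero_apply _
  · show ((AddEquiv.ofBijective (DirectSum.coeAddMonoidHom 𝒩) hint).symm (y + z)) g = 0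
    rw [map_add, DirectSum.add_apply]
    change _ = (0 : ↥(𝒩 g)) at hy hz
    rw [hy, hz, add_zero]

/-- Coarsening preserves internality of the grading. -/
theorem coarsen_isInternal (ψ : G →+ H) {X : Type} [AddCommGroup X]
    {𝒩 : G → AddSubgroup X} (hint : DirectSum.IsInternal 𝒩) :
    DirectSum.IsInternal (coarsen ψ 𝒩) := by
  classical
  set D := AddEquiv.ofBijective _ hint with hD
  have hzero : ∀ d : ⨁ h, ↥(coarsen ψ 𝒩 h), DirectSum.coeAddMonoidHom _ d = 0 → d = 0 := by
    intro d hd0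
    have hsum : ∑ h ∈ DFinsupp.support d, ((d h : X)) = 0 := by
      have := congrArg (DirectSum.coeAddMonoidHom (coarsen ψ 𝒩)) (DirectSum.sum_support_of d)
      rw [map_sum, hd0] at this
      simpa only [DirectSum.coeAddMonoidHom_of] using this
    have key : ∀ g0 : G, (D.symm ((d (ψ g0) : X))) g0 = 0 := by
      intro g0
      have h4 := congrArg D.symm hsum
      rw [map_sum, map_zero] at h4
      have h5 : (∑ h ∈ DFinsupp.support d, D.symm ((d h : X))) g0
          = (0 : ⨁ g, ↥(𝒩 g)) g0 := by rw [h4]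
      rw [DFinsupp.finset_sum_apply, DirectSum.zero_apply] at h5
      by_cases hmem : ψ g0 ∈ DFinsupp.support d
      · rw [Finset.sum_eq_single (ψ g0)] at h5
        · exact h5
        · intro h _ hne
          exact coarsen_decompose_eq_zero ψ hint (d h).2 (fun e => hne e.symm)
        · intro hn; exact absurd hmem hn
      · rw [DFinsupp.notMem_support_iff] at hmem
        rw [hmem]
        simp only [ZeroMemClass.coe_zero, map_zero, DirectSum.zero_apply]
    refine DFinsupp.ext fun h0 => ?_
    have hsymm0 : D.symm ((d h0 : X)) = 0 := by
      refine DFinsupp.ext fun g0 => ?_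
      by_cases hg : ψ g0 = h0
      · rw [← hg]; rw [DirectSum.zero_apply]; exact key g0
      · rw [coarsen_decompose_eq_zero ψ hint (d h0).2 hg, DirectSum.zero_apply]
    have : ((d h0 : X)) = 0 := by
      have := congrArg D hsymm0
      rwa [AddEquiv.apply_symm_apply, map_zero] at this
    exact Subtype.ext this
  constructor
  · intro d1 d2 he
    have := hzero (d1 - d2) (by rw [map_sub, he, sub_self])
    exact sub_eq_zero.mp this
  · intro x
    obtain ⟨c, rfl⟩ := hint.surjective x
    refine ⟨∑ g ∈ DFinsupp.support c,
      DirectSum.of (fun h => ↥(coarsen ψ 𝒩 h)) (ψ g) ⟨(c g : X), mem_coarsen_of ψ rfl (c g).2⟩, ?_⟩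
    rw [map_sum]
    conv_rhs => rw [← DirectSum.sum_support_of c, map_sum]
    exact Finset.sum_congr rfl fun g _ => by
      simp only [DirectSum.coeAddMonoidHom_of]

omit [DecidableEq G] [DecidableEq H] in
/-- Coarsening preserves the scalar-closure condition of graded modules. -/
theorem coarsen_smul_mem {R X : Type} [CommRing R] [AddCommGroup X] [Module R X]
    (ψ : G →+ H) (𝒜 : G → AddSubgroup R) (𝒩 : G → AddSubgroup X)
    (hsm : ∀ {g h : G} {r : R} {x : X}, r ∈ 𝒜 g → x ∈ 𝒩 h → r • x ∈ 𝒩 (g + h))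
    {h1 h2 : H} {r : R} {x : X} (hr : r ∈ coarsen ψ 𝒜 h1) (hx : x ∈ coarsen ψ 𝒩 h2) :
    r • x ∈ coarsen ψ 𝒩 (h1 + h2) := by
  refine coarsen_induction ψ 𝒜 h1 (C := fun r => r • x ∈ coarsen ψ 𝒩 (h1 + h2)) hr
    (fun g1 hg1 y hy => ?_) ?_ (fun y z hy hz => ?_)
  · refine coarsen_induction ψ 𝒩 h2 (C := fun x => y • x ∈ coarsen ψ 𝒩 (h1 + h2)) hx
      (fun g2 hg2 z hz => ?_) ?_ (fun z w hz hw => ?_)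
    · show y • z ∈ coarsen ψ 𝒩 (h1 + h2)
      exact mem_coarsen_of ψ (by rw [map_add, hg1, hg2]) (hsm hy hz)
    · show y • (0 : X) ∈ coarsen ψ 𝒩 (h1 + h2)
      rw [smul_zero]; exact zero_mem _
    · show y • (z + w) ∈ coarsen ψ 𝒩 (h1 + h2)
      change y • z ∈ coarsen ψ 𝒩 (h1 + h2) at hz
      change y • w ∈ coarsen ψ 𝒩 (h1 + h2) at hw
      rw [smul_add]; exact add_mem hz hw
  · show (0 : R) • x ∈ coarsen ψ 𝒩 (h1 + h2)
    rw [zero_smul]; exact zero_mem _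
  · show (y + z) • x ∈ coarsen ψ 𝒩 (h1 + h2)
    change y • x ∈ coarsen ψ 𝒩 (h1 + h2) at hy
    change z • x ∈ coarsen ψ 𝒩 (h1 + h2) at hz
    rw [add_smul]; exact add_mem hy hz

omit [DecidableEq H] in
theorem of_mk_congr {M : Type} [AddCommGroup M] (ψ : G →+ H) (ℳ : H → AddSubgroup M)
    {g1 g2 : G} (hgg : g1 = g2) (x : M) (p1 : x ∈ ℳ (ψ g1)) (p2 : x ∈ ℳ (ψ g2)) :
    DirectSum.of (fun g => ↥(ℳ (ψ g))) g1 ⟨x, p1⟩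
      = DirectSum.of (fun g => ↥(ℳ (ψ g))) g2 ⟨x, p2⟩ := by
  subst hgg; rfl

/-- The canonical `G`-grading on `⨁ g, ℳ (ψ g)`: the `g`-th component consists of the
elements supported at `g`. -/
def fiberGrading {M : Type} [AddCommGroup M] (ψ : G →+ H) (ℳ : H → AddSubgroup M) (g : G) :
    AddSubgroup (⨁ g : G, ↥(ℳ (ψ g))) where
  carrier := {x | ∀ g', g' ≠ g → x g' = 0}
  zero_mem' := fun _ _ => DirectSum.zero_apply _
  add_mem' := fun {x y} hx hy g' hg' => by
    rw [DirectSum.add_apply, hx g' hg', hy g' hg', add_zero]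
  neg_mem' := fun {x} hx g' hg' => by rw [DFinsupp.neg_apply, hx g' hg', neg_zero]

omit [DecidableEq H] in
theorem of_mem_fiberGrading {M : Type} [AddCommGroup M] (ψ : G →+ H) (ℳ : H → AddSubgroup M)
    (g : G) (m : ↥(ℳ (ψ g))) :
    DirectSum.of (fun g => ↥(ℳ (ψ g))) g m ∈ fiberGrading ψ ℳ g :=
  fun _ hg' => DirectSum.of_eq_of_ne _ _ _ hg'

omit [DecidableEq H] in
theorem eq_of_mem_fiberGrading {M : Type} [AddCommGroup M] {ψ : G →+ H} {ℳ : H → AddSubgroup M}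
    {g : G} {x : ⨁ g : G, ↥(ℳ (ψ g))} (hx : x ∈ fiberGrading ψ ℳ g) :
    DirectSum.of (fun g => ↥(ℳ (ψ g))) g (x g) = x := by
  refine DFinsupp.ext fun g' => ?_
  by_cases h : g' = g
  · subst h; rw [DirectSum.of_eq_same]
  · rw [DirectSum.of_eq_of_ne _ _ _ h]
    exact (hx g' h).symm

omit [DecidableEq H] in
theorem fiberGrading_isInternal {M : Type} [AddCommGroup M] (ψ : G →+ H)
    (ℳ : H → AddSubgroup M) : DirectSum.IsInternal (fiberGrading ψ ℳ) := by
  classical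
  set Φ : (⨁ g : G, ↥(ℳ (ψ g))) →+ ⨁ g, ↥(fiberGrading ψ ℳ g) :=
    DirectSum.toAddMonoid (fun g =>
      (DirectSum.of (fun g => ↥(fiberGrading ψ ℳ g)) g).comp
        { toFun := fun m => ⟨DirectSum.of (fun g => ↥(ℳ (ψ g))) g m,
            of_mem_fiberGrading ψ ℳ g m⟩
          map_zero' := Subtype.ext (map_zero _)
          map_add' := fun a b => Subtype.ext (map_add _ a b) }) with hΦ
  have hΦof : ∀ (g : G) (m : ↥(ℳ (ψ g))),
      Φ (DirectSum.of (fun g => ↥(ℳ (ψ g))) g m)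
        = DirectSum.of (fun g => ↥(fiberGrading ψ ℳ g)) g
            ⟨DirectSum.of (fun g => ↥(ℳ (ψ g))) g m, of_mem_fiberGrading ψ ℳ g m⟩ := by
    intro g m
    rw [hΦ, DirectSum.toAddMonoid_of]
    rfl
  have hleft : (DirectSum.coeAddMonoidHom (fiberGrading ψ ℳ)).comp Φ
      = AddMonoidHom.id (⨁ g : G, ↥(ℳ (ψ g))) := by
    refine DirectSum.addHom_ext (β := fun g : G => ↥(ℳ (ψ g))) fun g m => ?_
    simp only [AddMonoidHom.comp_apply, AddMonoidHom.id_apply]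
    rw [hΦof g m]
    exact DirectSum.coeAddMonoidHom_of _ _ _
  have hright : Φ.comp (DirectSum.coeAddMonoidHom (fiberGrading ψ ℳ))
      = AddMonoidHom.id (⨁ g : G, ↥(fiberGrading ψ ℳ g)) := by
    refine DirectSum.addHom_ext (β := fun g : G => ↥(fiberGrading ψ ℳ g)) fun g x => ?_
    simp only [AddMonoidHom.comp_apply, AddMonoidHom.id_apply]
    rw [DirectSum.coeAddMonoidHom_of]
    conv_lhs => rw [← eq_of_mem_fiberGrading x.2]
    rw [hΦof g _]
    exact congrArg _ (Subtype.ext (eq_of_mem_fiberGrading x.2))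

  constructor
  · intro a b hab
    exact (DFunLike.congr_fun hright a).symm.trans
      ((congrArg Φ hab).trans (DFunLike.congr_fun hright b))
  · intro y
    exact ⟨Φ y, DFunLike.congr_fun hleft y⟩

end SteadyAux

/-- **Statement 14** (Proposition, second half): if `ker ψ` is finite and `R` is steady,
then the `ψ`-coarsening `R_[ψ]` is steady. -/
theorem coarsening_steady_of_steady_of_ker_finite
    {G H R : Type} [AddCommGroup G] [AddCommGroup H] [CommRing R]
    (ψ : G →+ H) (hψ : Function.Surjective ψ) (hfin : Finite ψ.ker)
    (𝒜 : G → AddSubgroup R) (h𝒜 : IsGradedRing 𝒜)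
    (hsteady : IsSteady 𝒜) :
    IsSteady (coarsen ψ 𝒜) := by
  letI := Classical.decEq G
  letI := Classical.decEq H
  intro M _ _ ℳ hMmod hMsmall
  -- set up the graded ring structure on `R`
  letI gmon : SetLike.GradedMonoid 𝒜 :=
    { one_mem := h𝒜.1, mul_mem := fun {_ _ _ _} hi hj => h𝒜.2.1 hi hj }
  letI gdec : DirectSum.Decomposition 𝒜 := h𝒜.2.2.chooseDecomposition
  letI gring : GradedRing 𝒜 := { gmon, gdec with }
  have hsmulM : ∀ {g : G} {h : H} {r : R} {m : M}, r ∈ 𝒜 g → m ∈ ℳ h → r • m ∈ ℳ (ψ g + h) :=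
    fun hr hm => hMmod.1 (mem_coarsen_of ψ rfl hr) hm
  letI decM : DirectSum.Decomposition ℳ := hMmod.2.chooseDecomposition
  -- `N := ⨁ g, ℳ (ψ g)` is a `G`-graded `R`-module
  letI gsmul : SetLike.GradedSMul 𝒜 (fun g : G => ℳ (ψ g)) :=
    ⟨fun {i j} {ai mj} hai hmj => by
      show ai • mj ∈ ℳ (ψ (i + j))
      rw [map_add]; exact hsmulM hai hmj⟩
  letI modN : Module R (⨁ g : G, ↥(ℳ (ψ g))) := GradedModule.isModule 𝒜 (fun g : G => ℳ (ψ g))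
  have key_smul : ∀ {a : G} {r : R} (hr : r ∈ 𝒜 a) (g : G) (m : ↥(ℳ (ψ g))),
      r • (DirectSum.of (fun g : G => ↥(ℳ (ψ g))) g m)
        = DirectSum.of (fun g : G => ↥(ℳ (ψ g))) (a + g)
            ⟨r • (m : M), by rw [map_add]; exact hsmulM hr m.2⟩ := by
    intro a r hr g m
    have h1 : r • (DirectSum.of (fun g : G => ↥(ℳ (ψ g))) g m)
        = DirectSum.decompose 𝒜 r • (DirectSum.of (fun g : G => ↥(ℳ (ψ g))) g m) := rfl
    rw [h1, DirectSum.decompose_of_mem 𝒜 hr, DirectSum.Gmodule.of_smul_of]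
    exact congrArg _ (Subtype.ext (SetLike.coe_GSMul 𝒜 (fun g : G => ℳ (ψ g)) ⟨r, hr⟩ m))
  -- the `G`-grading on `N`
  have h𝒩smul : ∀ {g h : G} {r : R} {x : ⨁ g : G, ↥(ℳ (ψ g))},
      r ∈ 𝒜 g → x ∈ fiberGrading ψ ℳ h → r • x ∈ fiberGrading ψ ℳ (g + h) := by
    intro g h r x hr hx
    have hx' : r • x = DirectSum.of (fun g : G => ↥(ℳ (ψ g))) (g + h)
        ⟨r • ((x h : ↥(ℳ (ψ h))) : M), by rw [map_add]; exact hsmulM hr (x h).2⟩ := by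
      conv_lhs => rw [← eq_of_mem_fiberGrading hx]
      exact key_smul hr h (x h)
    rw [hx']
    exact of_mem_fiberGrading ψ ℳ _ _
  have hNmod : IsGradedModule 𝒜 (fiberGrading ψ ℳ) :=
    ⟨fun {g h r x} hr hx => h𝒩smul hr hx, fiberGrading_isInternal ψ ℳ⟩
  -- the unit map `lam : M → N`
  set σ : H → G := Function.surjInv hψ with hσdef
  have hσ : ∀ h, ψ (σ h) = h := fun h => Function.surjInv_eq hψ h
  letI : Fintype ψ.ker := Fintype.ofFinite _
  have hker : ∀ (h : H) (k : ψ.ker), ψ (σ h + (k : G)) = h := fun h k => by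
    rw [map_add, hσ, AddMonoidHom.mem_ker.mp k.2, add_zero]
  set lamAdd : M →+ ⨁ g : G, ↥(ℳ (ψ g)) := ∑ k : ψ.ker,
    (DirectSum.toAddMonoid fun h =>
        (DirectSum.of (fun g : G => ↥(ℳ (ψ g))) (σ h + (k : G))).comp
          (AddSubgroup.inclusion (le_of_eq (congrArg ℳ (hker h k).symm)))).comp
      (DirectSum.decomposeAddEquiv ℳ).toAddMonoidHom with hlamAdd
  have lam_of : ∀ {h : H} (m : M) (hm : m ∈ ℳ h),
      lamAdd m = ∑ k : ψ.ker, DirectSum.of (fun g : G => ↥(ℳ (ψ g))) (σ h + (k : G))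
        ⟨m, by rw [hker]; exact hm⟩ := by
    intro h m hm
    rw [hlamAdd, AddMonoidHom.finset_sum_apply]
    refine Finset.sum_congr rfl fun k _ => ?_
    rw [AddMonoidHom.comp_apply]
    have : (DirectSum.decomposeAddEquiv ℳ).toAddMonoidHom m
        = DirectSum.of (fun h => ↥(ℳ h)) h ⟨m, hm⟩ := DirectSum.decompose_of_mem ℳ hm
    rw [this, DirectSum.toAddMonoid_of]
    rfl
  have lam_lin : ∀ (r : R) (x : M), lamAdd (r • x) = r • lamAdd x := by
    refine fun r => DirectSum.Decomposition.inductionOn 𝒜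
      (motive := fun r => ∀ x : M, lamAdd (r • x) = r • lamAdd x) ?_ ?_ ?_ r
    · intro x
      show lamAdd ((0 : R) • x) = (0 : R) • lamAdd x
      rw [zero_smul, map_zero, zero_smul]
    · intro a ra
      show ∀ x : M, lamAdd ((ra : R) • x) = (ra : R) • lamAdd x
      refine DirectSum.Decomposition.inductionOn ℳ
        (motive := fun x => lamAdd ((ra : R) • x) = (ra : R) • lamAdd x) ?_ ?_ ?_
      · show lamAdd ((ra : R) • (0 : M)) = (ra : R) • lamAdd (0 : M)
        rw [smul_zero, map_zero, smul_zero]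
      · intro h mh
        show lamAdd ((ra : R) • (mh : M)) = (ra : R) • lamAdd (mh : M)
        rw [lam_of (mh : M) mh.2, lam_of ((ra : R) • (mh : M)) (hsmulM ra.2 mh.2),
          Finset.smul_sum]
        have hc : σ (ψ (a : G) + h) - (a : G) - σ h ∈ ψ.ker := by
          rw [AddMonoidHom.mem_ker, map_sub, map_sub, hσ, hσ]
          abel
        refine Fintype.sum_equiv (Equiv.addRight (⟨_, hc⟩ : ψ.ker)) _ _ fun k => ?_
        show _ = (ra : R) • DirectSum.of (fun g : G => ↥(ℳ (ψ g)))
          (σ h + ((k + ⟨_, hc⟩ : ψ.ker) : G)) ⟨(mh : M), _⟩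
        rw [key_smul ra.2]
        refine of_mk_congr ψ ℳ ?_ _ _ _
        show σ (ψ a + h) + (k : G) = a + (σ h + ((k : G) + (σ (ψ a + h) - a - σ h)))
        abel
      · intro x y hx hy
        show lamAdd ((ra : R) • (x + y)) = (ra : R) • lamAdd (x + y)
        change lamAdd ((ra : R) • x) = (ra : R) • lamAdd x at hx
        change lamAdd ((ra : R) • y) = (ra : R) • lamAdd y at hy
        rw [smul_add, map_add, map_add, hx, hy, smul_add]
    · intro r1 r2 h1 h2 x
      change ∀ x : M, lamAdd (r1 • x) = r1 • lamAdd x at h1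
      change ∀ x : M, lamAdd (r2 • x) = r2 • lamAdd x at h2
      show lamAdd ((r1 + r2) • x) = (r1 + r2) • lamAdd x
      rw [add_smul, map_add, h1, h2, add_smul]
  set lam : M →ₗ[R] ⨁ g : G, ↥(ℳ (ψ g)) :=
    { toFun := lamAdd, map_add' := lamAdd.map_add, map_smul' := fun r x => lam_lin r x }
    with hlam
  -- smallness of `N`
  have hNsmall : IsSmall 𝒜 (fiberGrading ψ ℳ) := by
    intro ι Nfam _ _ 𝒩fam h𝒩fam f hf
    have hcoarse : ∀ i, IsGradedModule (coarsen ψ 𝒜) (coarsen ψ (𝒩fam i)) := fun i =>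
      ⟨fun {h1 h2 r x} hr hx =>
          coarsen_smul_mem ψ 𝒜 (𝒩fam i) (fun {g h r x} hr hx => (h𝒩fam i).1 hr hx) hr hx,
        coarsen_isInternal ψ (h𝒩fam i).2⟩
    have hfb_graded : IsGradedHom ℳ (directSumGrading fun i => coarsen ψ (𝒩fam i)) (f ∘ₗ lam) := by
      intro h m hm
      show f (lam m) ∈ _
      have hl : lam m = lamAdd m := rfl
      rw [hl, lam_of m hm, map_sum]
      refine fun i => ?_
      rw [DFinsupp.finset_sum_apply]
      refine sum_mem fun k _ => ?_
      exact mem_coarsen_of ψ (hker h k)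
        ((hf (σ h + (k : G)) _ (of_mem_fiberGrading ψ ℳ _ _)) i)
    obtain ⟨s, hs⟩ := hMsmall ι Nfam (fun i => coarsen ψ (𝒩fam i)) hcoarse (f ∘ₗ lam) hfb_graded
    refine ⟨s, fun x i hi => ?_⟩
    induction x using DirectSum.induction_on with
    | zero => rw [map_zero]; exact DirectSum.zero_apply _
    | of g mg =>
      have hpf : ∀ k : ψ.ker, (mg : M) ∈ ℳ (ψ (σ (ψ g) + (k : G))) := fun k => by
        rw [hker]; exact mg.2
      have hterm : ∀ k0 : ψ.ker,
          (f (DirectSum.of (fun g : G => ↥(ℳ (ψ g))) (σ (ψ g) + (k0 : G)) ⟨(mg : M), hpf k0⟩)) i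
            = 0 := by
        intro k0
        refine sum_homog_eq_zero (𝒩 := 𝒩fam i) (h𝒩fam i).2
          (d := fun k : ψ.ker => σ (ψ g) + (k : G)) ?_
          (t := fun k : ψ.ker =>
            (f (DirectSum.of (fun g : G => ↥(ℳ (ψ g))) (σ (ψ g) + (k : G))
              ⟨(mg : M), hpf k⟩)) i) ?_ ?_ k0
        · intro k1 k2 he
          exact Subtype.ext (add_left_cancel he)
        · intro k
          exact (hf (σ (ψ g) + (k : G)) _ (of_mem_fiberGrading ψ ℳ _ _)) i
        · have h0 := hs (mg : M) i hi
          have hl : (f ∘ₗ lam) (mg : M) = f (lamAdd (mg : M)) := rfl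
          rw [hl, lam_of (mg : M) mg.2, map_sum, DFinsupp.finset_sum_apply] at h0
          exact h0
      have hk0 : g - σ (ψ g) ∈ ψ.ker := by
        rw [AddMonoidHom.mem_ker, map_sub, hσ, sub_self]
      have hE := of_mk_congr ψ ℳ
        (show σ (ψ g) + ((⟨g - σ (ψ g), hk0⟩ : ψ.ker) : G) = g by
          rw [← add_sub_assoc, add_sub_cancel_left])
        (mg : M) (hpf ⟨g - σ (ψ g), hk0⟩) mg.2
      have := hterm ⟨g - σ (ψ g), hk0⟩
      rw [hE] at this
      exact this
    | add x y hx hy =>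
      rw [map_add, DirectSum.add_apply, hx, hy, add_zero]
  -- `N` is finitely generated, hence so is its quotient `M`
  have hNfin : Module.Finite R (⨁ g : G, ↥(ℳ (ψ g))) :=
    hsteady _ (fiberGrading ψ ℳ) hNmod hNsmall
  have s_lin : ∀ (r : R) (x : ⨁ g : G, ↥(ℳ (ψ g))),
      DirectSum.coeAddMonoidHom (fun g : G => ℳ (ψ g)) (r • x)
        = r • DirectSum.coeAddMonoidHom (fun g : G => ℳ (ψ g)) x := by
    refine fun r => DirectSum.Decomposition.inductionOn 𝒜
      (motive := fun r => ∀ x : ⨁ g : G, ↥(ℳ (ψ g)),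
        DirectSum.coeAddMonoidHom (fun g : G => ℳ (ψ g)) (r • x)
          = r • DirectSum.coeAddMonoidHom (fun g : G => ℳ (ψ g)) x) ?_ ?_ ?_ r
    · intro x
      show DirectSum.coeAddMonoidHom (fun g : G => ℳ (ψ g)) ((0 : R) • x)
        = (0 : R) • DirectSum.coeAddMonoidHom (fun g : G => ℳ (ψ g)) x
      rw [zero_smul, map_zero, zero_smul]
    · intro a ra
      show ∀ x : ⨁ g : G, ↥(ℳ (ψ g)), DirectSum.coeAddMonoidHom (fun g : G => ℳ (ψ g))
        ((ra : R) • x) = (ra : R) • DirectSum.coeAddMonoidHom (fun g : G => ℳ (ψ g)) x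
      intro x
      induction x using DirectSum.induction_on with
      | zero => rw [smul_zero, map_zero, smul_zero]
      | of g mg =>
        rw [key_smul ra.2 g mg, DirectSum.coeAddMonoidHom_of, DirectSum.coeAddMonoidHom_of]
      | add x y hx hy => rw [smul_add, map_add, map_add, hx, hy, smul_add]
    · intro r1 r2 h1 h2 x
      change ∀ x, _ = r1 • _ at h1
      change ∀ x, _ = r2 • _ at h2
      show DirectSum.coeAddMonoidHom (fun g : G => ℳ (ψ g)) ((r1 + r2) • x)
        = (r1 + r2) • DirectSum.coeAddMonoidHom (fun g : G => ℳ (ψ g)) x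
      rw [add_smul, map_add, h1, h2, add_smul]
  set sLin : (⨁ g : G, ↥(ℳ (ψ g))) →ₗ[R] M :=
    { toFun := DirectSum.coeAddMonoidHom (fun g : G => ℳ (ψ g)),
      map_add' := map_add _, map_smul' := fun r x => s_lin r x } with hsLin
  have hsurj : Function.Surjective sLin := by
    classical
    intro m
    obtain ⟨c, rfl⟩ := hMmod.2.surjective m
    refine ⟨∑ h ∈ DFinsupp.support c, DirectSum.of (fun g : G => ↥(ℳ (ψ g))) (σ h)
      ⟨(c h : M), by rw [hσ]; exact (c h).2⟩, ?_⟩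
    show DirectSum.coeAddMonoidHom (fun g : G => ℳ (ψ g)) _ = _
    rw [map_sum]
    conv_rhs => rw [← DirectSum.sum_support_of c, map_sum]
    exact Finset.sum_congr rfl fun h _ => by
      rw [DirectSum.coeAddMonoidHom_of, DirectSum.coeAddMonoidHom_of]
  exact Module.Finite.of_surjective sLin hsurj
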